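/- (Generalised Cheng–Graham / Kusmin–Landau lemma) Let f be a real-valued function with a monotonic and continuous derivative on [a, b), and suppose there exist real numbers U, V > 1 and an integer ℓ such that ℓ + 1/U ≤ f'(x) ≤ ℓ + 1 − 1/V for all x ∈ [a, b). Then |∑_{a ≤ n < b} e(f(n))| ≤ (U + V)/π, where the sum runs over integers n with a ≤ n < b. -/

import Mathlib

open Complex Real

noncomputable def klK (t : ℝ) : ℝ := Real.cos (π * t) / (2 * Real.sin (π * t))

noncomputable def klW (t : ℝ) : ℂ := -(1/2) - (klK t : ℝ) * Complex.I

lemma kl_sin_pos {t : ℝ} (h0 : 0 < t) (h1 : t < 1) : 0 < Real.sin (π * t) :=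
  Real.sin_pos_of_pos_of_lt_pi (by positivity) (by nlinarith [Real.pi_pos])

lemma klW_mul {t : ℝ} (h0 : 0 < t) (h1 : t < 1) :
    (Complex.exp (2 * π * Complex.I * t) - 1) * klW t = 1 := by
  have hs : 0 < Real.sin (π * t) := kl_sin_pos h0 h1
  have hrw : (2 * (π:ℂ) * Complex.I * t) = ((2*(π*t) : ℝ) : ℂ) * Complex.I := by
    push_cast; ring
  rw [hrw, Complex.exp_mul_I, klW, klK]
  rw [← Complex.ofReal_cos, ← Complex.ofReal_sin]
  rw [show (2*(π*t)) = 2*(π*t) from rfl, Real.cos_two_mul, Real.sin_two_mul]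
  have hsc : Real.sin (π*t)^2 + Real.cos (π*t)^2 = 1 := Real.sin_sq_add_cos_sq _
  set s := Real.sin (π*t)
  set c := Real.cos (π*t)
  have hs' : (s:ℂ) ≠ 0 := by exact_mod_cast hs.ne'
  have key : (s:ℂ)^2 + (c:ℂ)^2 = 1 := by exact_mod_cast hsc
  push_cast
  field_simp
  linear_combination (-2*(c:ℂ)*Complex.I)*key + (-2*(c:ℂ)^2*(s:ℂ))*Complex.I_sq

lemma klW_abs {t : ℝ} (h0 : 0 < t) (h1 : t < 1) :
    ‖klW t‖ = 1 / (2 * Real.sin (π * t)) := by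
  have hs : 0 < Real.sin (π * t) := kl_sin_pos h0 h1
  have hsc : Real.sin (π*t)^2 + Real.cos (π*t)^2 = 1 := Real.sin_sq_add_cos_sq _
  have : klW t = ((-(1/2) : ℝ) : ℂ) + ((- klK t : ℝ) : ℂ) * Complex.I := by
    rw [klW]; push_cast; ring
  rw [this, Complex.norm_add_mul_I, klK]
  rw [show ((-(1/2):ℝ)^2 + (-(Real.cos (π*t) / (2 * Real.sin (π*t))))^2)
      = (1/(2*Real.sin (π*t)))^2 by field_simp; linarith]
  exact Real.sqrt_sq (by positivity)

lemma klW_one_add_abs {t : ℝ} (h0 : 0 < t) (h1 : t < 1) :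
    ‖1 + klW t‖ = 1 / (2 * Real.sin (π * t)) := by
  have h := klW_mul h0 h1
  have : 1 + klW t = Complex.exp (2 * π * Complex.I * t) * klW t := by linear_combination -h
  rw [this, norm_mul]
  have hrw : (2 * (π:ℂ) * Complex.I * t) = ((2*(π*t) : ℝ) : ℂ) * Complex.I := by
    push_cast; ring
  rw [hrw, Complex.norm_exp_ofReal_mul_I, one_mul, klW_abs h0 h1]

lemma klW_sub_abs {t u : ℝ} :
    ‖klW t - klW u‖ = |klK u - klK t| := by
  have : klW t - klW u = ((klK u - klK t : ℝ) : ℂ) * Complex.I := by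
    rw [klW, klW]; push_cast; ring
  rw [this, norm_mul, Complex.norm_I, mul_one, Complex.norm_real, Real.norm_eq_abs]

lemma klK_anti {t u : ℝ} (h0 : 0 < t) (htu : t ≤ u) (h1 : u < 1) : klK u ≤ klK t := by
  have sx : 0 < Real.sin (π*t) := kl_sin_pos h0 (lt_of_le_of_lt htu h1)
  have sy : 0 < Real.sin (π*u) := kl_sin_pos (h0.trans_le htu) h1
  rw [klK, klK, div_le_div_iff₀ (by positivity) (by positivity)]
  have h2 : 0 ≤ Real.sin (π*u - π*t) :=
    Real.sin_nonneg_of_nonneg_of_le_pi (by nlinarith [Real.pi_pos]) (by nlinarith [Real.pi_pos])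
  rw [Real.sin_sub] at h2
  nlinarith

lemma kl_bound1 {x : ℝ} (hx : 0 < x) (hπ : x < π) :
    (1 + Real.cos x) / (2 * Real.sin x) ≤ 1 / x := by
  have hy1 : 0 < x/2 := by linarith
  have hy2 : x/2 < π/2 := by linarith
  have hc : 0 < Real.cos (x/2) := Real.cos_pos_of_mem_Ioo ⟨by linarith [Real.pi_pos], hy2⟩
  have hsy : 0 < Real.sin (x/2) := Real.sin_pos_of_pos_of_lt_pi hy1 (by linarith [Real.pi_pos])
  have htan := Real.lt_tan hy1 hy2
  rw [Real.tan_eq_sin_div_cos, lt_div_iff₀ hc] at htan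
  have hcos : 1 + Real.cos x = 2 * Real.cos (x/2)^2 := by
    have := Real.cos_sq (x/2)
    rw [show 2*(x/2) = x by ring] at this
    linarith
  have hsin : Real.sin x = 2 * Real.sin (x/2) * Real.cos (x/2) := by
    rw [← Real.sin_two_mul]; congr 1; ring
  have hs : 0 < Real.sin x := by rw [hsin]; positivity
  rw [div_le_div_iff₀ (by positivity) hx, hcos, hsin]
  nlinarith

lemma kl_Ico_split (N M : ℤ) (hNM : N ≤ M) (g : ℤ → ℂ) :
    ∑ n ∈ Finset.Ico N (M+1), g n = (∑ n ∈ Finset.Ico N M, g n) + g M := by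
  rw [← Finset.Ico_union_Ico_eq_Ico hNM (by linarith : M ≤ M + 1),
    Finset.sum_union (Finset.Ico_disjoint_Ico_consecutive N M (M+1))]
  congr 1
  rw [show Finset.Ico M (M+1) = {M} by ext x; simp only [Finset.mem_Ico, Finset.mem_singleton]; omega]
  simp

lemma kl_Ico_split' (N M : ℤ) (hNM : N ≤ M) (g : ℤ → ℝ) :
    ∑ n ∈ Finset.Ico N (M+1), g n = (∑ n ∈ Finset.Ico N M, g n) + g M := by
  rw [← Finset.Ico_union_Ico_eq_Ico hNM (by linarith : M ≤ M + 1),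
    Finset.sum_union (Finset.Ico_disjoint_Ico_consecutive N M (M+1))]
  congr 1
  rw [show Finset.Ico M (M+1) = {M} by ext x; simp only [Finset.mem_Ico, Finset.mem_singleton]; omega]
  simp

lemma kl_tele (h : ℤ → ℝ) (N : ℤ) :
    ∀ M, N + 2 ≤ M → ∑ n ∈ Finset.Ico (N+1) (M-1), (h (n-1) - h n) = h N - h (M-2) := by
  refine Int.le_induction ?_ ?_
  · rw [show N + 2 - 1 = N + 1 by ring]; simp
  · intro M hM ih
    rw [show M + 1 - 1 = (M-1) + 1 by ring, kl_Ico_split' _ _ (by linarith)]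
    rw [ih]
    rw [show M + 1 - 2 = M - 1 by ring, show M - 1 - 1 = M - 2 by ring]
    ring

lemma kl_abel (N : ℤ) (e w : ℤ → ℂ) :
    ∀ M, N + 2 ≤ M → (∀ n, N ≤ n → n ≤ M - 2 → (e (n+1) - e n) * w n = e n) →
    ∑ n ∈ Finset.Ico N M, e n
      = e (M-1) * (1 + w (M-2)) - e N * w N
        + ∑ n ∈ Finset.Ico (N+1) (M-1), e n * (w (n-1) - w n) := by
  refine Int.le_induction ?_ ?_
  · intro hkey
    have h0 := hkey N (le_refl N) (by linarith)
    rw [show N + 2 = (N+1)+1 by ring, kl_Ico_split _ _ (by linarith),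
      kl_Ico_split _ _ (by linarith)]
    simp only [show N+1+1-1 = N+1 by ring, show N+1+1-2 = N by ring,
      show (N:ℤ)+1+1-1 = N+1 by ring]
    rw [show Finset.Ico N N = ∅ from Finset.Ico_self N,
        show Finset.Ico (N+1) (N+1) = ∅ from Finset.Ico_self _]
    simp only [Finset.sum_empty, zero_add, add_zero]
    linear_combination -h0
  · intro M hM ih hkey
    have ih' := ih (fun n hn hn' => hkey n hn (by linarith))
    rw [kl_Ico_split _ _ (by linarith), ih']
    have hsplit := kl_Ico_split (N+1) (M-1) (by linarith) (fun n => e n * (w (n-1) - w n))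
    rw [show M - 1 + 1 = M + 1 - 1 by ring] at hsplit
    rw [hsplit]
    have hk := hkey (M-1) (by linarith) (by linarith)
    rw [show M - 1 + 1 = M by ring] at hk
    simp only [show M+1-1 = M by ring, show M+1-2 = M-1 by ring, show M-1-1 = M-2 by ring]
    linear_combination -hk

lemma kl_bound2 {y : ℝ} (hy : 0 < y) (hπ : y < π) :
    (1 - Real.cos y) / (2 * Real.sin y) ≤ 1 / (π - y) := by
  have h := kl_bound1 (x := π - y) (by linarith) (by linarith)
  rw [Real.cos_pi_sub, Real.sin_pi_sub] at h
  calc (1 - Real.cos y) / (2 * Real.sin y) = (1 + -Real.cos y) / (2 * Real.sin y) := by ring_nf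
    _ ≤ 1 / (π - y) := h

lemma kl_core (N M : ℤ) (U V : ℝ) (hU : 1 < U) (hV : 1 < V) (hNM : N + 2 ≤ M)
    (e : ℤ → ℂ) (θ : ℤ → ℝ)
    (hnorm : ∀ n, ‖e n‖ = 1)
    (hstep : ∀ n, N ≤ n → n ≤ M - 2 → e (n+1) = Complex.exp (2 * π * Complex.I * θ n) * e n)
    (hlo : ∀ n, N ≤ n → n ≤ M - 2 → U⁻¹ ≤ θ n)
    (hhi : ∀ n, N ≤ n → n ≤ M - 2 → θ n ≤ 1 - V⁻¹)
    (hmono : ∀ n, N ≤ n → n ≤ M - 3 → θ n ≤ θ (n+1)) :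
    ‖∑ n ∈ Finset.Ico N M, e n‖ ≤ (U + V) / π := by
  have hU0 : (0:ℝ) < U := by linarith
  have hV0 : (0:ℝ) < V := by linarith
  have hUi : (0:ℝ) < U⁻¹ := by positivity
  have hVi : (0:ℝ) < V⁻¹ := by positivity
  have hθ0 : ∀ n, N ≤ n → n ≤ M - 2 → 0 < θ n := by
    intro n h1 h2; linarith [hlo n h1 h2]
  have hθ1 : ∀ n, N ≤ n → n ≤ M - 2 → θ n < 1 := by
    intro n h1 h2; linarith [hhi n h1 h2]
  -- key identity
  have hkey : ∀ n, N ≤ n → n ≤ M - 2 → (e (n+1) - e n) * klW (θ n) = e n := by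
    intro n h1 h2
    rw [hstep n h1 h2]
    have h := klW_mul (hθ0 n h1 h2) (hθ1 n h1 h2)
    calc (Complex.exp (2 * π * Complex.I * θ n) * e n - e n) * klW (θ n)
        = ((Complex.exp (2 * π * Complex.I * θ n) - 1) * klW (θ n)) * e n := by ring
      _ = e n := by rw [h, one_mul]
  rw [kl_abel N e (fun n => klW (θ n)) M hNM hkey]
  -- bound each piece
  have hM2 : N ≤ M - 2 := by linarith
  set tN := θ N with htN
  set tL := θ (M-2) with htL
  have htN0 : 0 < tN := hθ0 N le_rfl hM2
  have htN1 : tN < 1 := hθ1 N le_rfl hM2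
  have htL0 : 0 < tL := hθ0 (M-2) hM2 le_rfl
  have htL1 : tL < 1 := hθ1 (M-2) hM2 le_rfl
  have t1 : ‖e (M-1) * (1 + klW tL)‖ = 1 / (2 * Real.sin (π * tL)) := by
    rw [norm_mul, hnorm, one_mul, klW_one_add_abs htL0 htL1]
  have t2 : ‖e N * klW tN‖ = 1 / (2 * Real.sin (π * tN)) := by
    rw [norm_mul, hnorm, one_mul, klW_abs htN0 htN1]
  have t3 : ‖∑ n ∈ Finset.Ico (N+1) (M-1), e n * (klW (θ (n-1)) - klW (θ n))‖
      ≤ klK tN - klK tL := by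
    refine (norm_sum_le _ _).trans ?_
    have hterm : ∀ n ∈ Finset.Ico (N+1) (M-1),
        ‖e n * (klW (θ (n-1)) - klW (θ n))‖ = klK (θ (n-1)) - klK (θ n) := by
      intro n hn
      rw [Finset.mem_Ico] at hn
      have hn1 : N ≤ n - 1 := by omega
      have hn2 : n - 1 ≤ M - 3 := by omega
      have hmo := hmono (n-1) hn1 hn2
      rw [show n - 1 + 1 = n by ring] at hmo
      have hKle : klK (θ n) ≤ klK (θ (n-1)) :=
        klK_anti (hθ0 (n-1) hn1 (by omega)) hmo (hθ1 n (by omega) (by omega))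
      rw [norm_mul, hnorm, one_mul, klW_sub_abs, abs_of_nonpos (by linarith)]
      ring
    rw [Finset.sum_congr rfl hterm]
    have := kl_tele (fun n => klK (θ n)) N M hNM
    rw [show (∑ n ∈ Finset.Ico (N+1) (M-1), (klK (θ (n-1)) - klK (θ n)))
        = ∑ n ∈ Finset.Ico (N+1) (M-1), ((fun n => klK (θ n)) (n-1) - (fun n => klK (θ n)) n)
        from rfl, this]
  calc ‖e (M-1) * (1 + klW tL) - e N * klW tN
          + ∑ n ∈ Finset.Ico (N+1) (M-1), e n * (klW (θ (n-1)) - klW (θ n))‖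
      ≤ ‖e (M-1) * (1 + klW tL) - e N * klW tN‖
        + ‖∑ n ∈ Finset.Ico (N+1) (M-1), e n * (klW (θ (n-1)) - klW (θ n))‖ := by
        exact norm_add_le _ _
    _ ≤ ‖e (M-1) * (1 + klW tL)‖ + ‖e N * klW tN‖
        + (klK tN - klK tL) := by
        have h := norm_add_le (e (M-1) * (1 + klW tL)) (-(e N * klW tN))
        rw [← sub_eq_add_neg, norm_neg] at h
        linarith [t3]
    _ = (1 / (2 * Real.sin (π * tL)) - klK tL) + (1 / (2 * Real.sin (π * tN)) + klK tN) := by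
        rw [t1, t2]; ring
    _ ≤ V / π + U / π := by
        have hloN := hlo N le_rfl hM2
        have hhiL := hhi (M-2) hM2 le_rfl
        have hx1 : π * tN < π := by nlinarith [Real.pi_pos]
        have hA := kl_bound1 (x := π * tN) (by positivity) hx1
        have hy1 : π * tL < π := by nlinarith [Real.pi_pos]
        have hB := kl_bound2 (y := π * tL) (by positivity) hy1
        have hπU : π * U⁻¹ ≤ π * tN := by nlinarith [Real.pi_pos]
        have h1 : 1/(π * tN) ≤ U/π := by
          have h := one_div_le_one_div_of_le (by positivity) hπU
          rwa [show 1/(π * U⁻¹) = U/π by field_simp] at h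
        have hπV : π * V⁻¹ ≤ π - π * tL := by nlinarith [Real.pi_pos]
        have h2 : 1/(π - π * tL) ≤ V/π := by
          have h := one_div_le_one_div_of_le (by positivity) hπV
          rwa [show 1/(π * V⁻¹) = V/π by field_simp] at h
        rw [klK, klK]
        have hsN : 0 < Real.sin (π * tN) := kl_sin_pos htN0 htN1
        have hsL : 0 < Real.sin (π * tL) := kl_sin_pos htL0 htL1
        have e1 : 1/(2*Real.sin (π*tN)) + Real.cos (π*tN)/(2*Real.sin (π*tN))
            = (1+Real.cos (π*tN))/(2*Real.sin (π*tN)) := by ring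
        have e2 : 1/(2*Real.sin (π*tL)) - Real.cos (π*tL)/(2*Real.sin (π*tL))
            = (1-Real.cos (π*tL))/(2*Real.sin (π*tL)) := by ring
        linarith
    _ = (U + V) / π := by ring

theorem kusmin_landau (a b : ℝ) (f f' : ℝ → ℝ) (U V : ℝ) (ℓ : ℤ)
    (hU : 1 < U) (hV : 1 < V)
    (hderiv : ∀ x ∈ Set.Ico a b, HasDerivAt f (f' x) x)
    (hcont : ContinuousOn f' (Set.Ico a b))
    (hmono : MonotoneOn f' (Set.Ico a b) ∨ AntitoneOn f' (Set.Ico a b))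
    (hlo : ∀ x ∈ Set.Ico a b, (ℓ : ℝ) + U⁻¹ ≤ f' x)
    (hhi : ∀ x ∈ Set.Ico a b, f' x ≤ (ℓ : ℝ) + 1 - V⁻¹) :
    ‖(∑ n ∈ Finset.Ico ⌈a⌉ ⌈b⌉,
        Complex.exp (2 * Real.pi * Complex.I * (f n)))‖ ≤ (U + V) / Real.pi := by
  have hπ := Real.pi_pos
  have hU0 : (0:ℝ) < U := by linarith
  have hV0 : (0:ℝ) < V := by linarith
  have hUi : (0:ℝ) < U⁻¹ := by positivity
  have hVi : (0:ℝ) < V⁻¹ := by positivity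
  set N := ⌈a⌉ with hNdef
  set M := ⌈b⌉ with hMdef
  rcases le_or_gt M N with hMN | hMN
  · rw [Finset.Ico_eq_empty (not_lt.mpr hMN), Finset.sum_empty, norm_zero]
    positivity
  -- every integer in the range lies in [a, b)
  have hmem : ∀ n : ℤ, N ≤ n → n ≤ M - 1 → ((n:ℝ)) ∈ Set.Ico a b := by
    intro n h1 h2
    constructor
    · calc a ≤ (N:ℝ) := Int.le_ceil a
        _ ≤ (n:ℝ) := by exact_mod_cast h1
    · have hn : (n:ℝ) ≤ (M:ℝ) - 1 := by
        have : ((n:ℝ)) ≤ ((M - 1 : ℤ) : ℝ) := by exact_mod_cast h2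
        push_cast at this; linarith
      have hb : (M:ℝ) < b + 1 := Int.ceil_lt_add_one b
      linarith
  have hNmem : ((N:ℝ)) ∈ Set.Ico a b := hmem N le_rfl (by omega)
  have hUV1 : U⁻¹ + V⁻¹ ≤ 1 := by
    have h1 := hlo _ hNmem; have h2 := hhi _ hNmem; linarith
  have hUV4 : 4 ≤ U + V := by
    have e1 : U * U⁻¹ = 1 := mul_inv_cancel₀ hU0.ne'
    have e2 : V * V⁻¹ = 1 := mul_inv_cancel₀ hV0.ne'
    nlinarith [sq_nonneg (U - V), sq_nonneg (U + V - 4), mul_pos hU0 hV0,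
      mul_le_mul_of_nonneg_left hUV1 (le_of_lt (mul_pos hU0 hV0))]
  set e : ℤ → ℂ := fun n => Complex.exp (2 * π * Complex.I * (f n)) with hedef
  have hnorm : ∀ n : ℤ, ‖e n‖ = 1 := by
    intro n
    rw [hedef]
    simp only []
    rw [show (2 * (π:ℂ) * Complex.I * (f n)) = ((2 * π * f n : ℝ) : ℂ) * Complex.I by
      push_cast; ring]
    exact Complex.norm_exp_ofReal_mul_I _
  rcases eq_or_lt_of_le (by omega : N + 1 ≤ M) with h1 | h2
  · -- single term
    rw [← h1, show Finset.Ico N (N+1) = {N} by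
        ext x; simp only [Finset.mem_Ico, Finset.mem_singleton]; omega,
      Finset.sum_singleton]
    rw [show (2 * (π:ℂ) * Complex.I * (f N)) = ((2 * π * f N : ℝ) : ℂ) * Complex.I by
      push_cast; ring, Complex.norm_exp_ofReal_mul_I]
    rw [le_div_iff₀ hπ, one_mul]
    linarith [Real.pi_le_four]
  have hNM2 : N + 2 ≤ M := by omega
  set θ : ℤ → ℝ := fun n => f ((n+1 : ℤ)) - f n - ℓ with hθdef
  -- MVT
  have hMVT : ∀ n : ℤ, N ≤ n → n ≤ M - 2 →
      ∃ ξ : ℝ, ((n:ℝ) < ξ ∧ ξ < (n:ℝ) + 1) ∧ ξ ∈ Set.Ico a b ∧ f' ξ = θ n + ℓ := by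
    intro n hn1 hn2
    have hsub : Set.Icc (n:ℝ) ((n:ℝ)+1) ⊆ Set.Ico a b := by
      intro x hx
      have hxa := (hmem n hn1 (by omega)).1
      have hxb := (hmem (n+1) (by omega) (by omega))
      push_cast at hxb
      exact ⟨le_trans hxa hx.1, lt_of_le_of_lt hx.2 hxb.2⟩
    have hlt : (n:ℝ) < (n:ℝ) + 1 := by linarith
    obtain ⟨c, hc, hc'⟩ := exists_hasDerivAt_eq_slope f f' hlt
      (fun x hx => ((hderiv x (hsub hx)).continuousAt).continuousWithinAt)
      (fun x hx => hderiv x (hsub (Set.Ioo_subset_Icc_self hx)))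
    refine ⟨c, ⟨hc.1, hc.2⟩, hsub (Set.Ioo_subset_Icc_self hc), ?_⟩
    rw [hc', hθdef]
    push_cast
    field_simp
    ring
  choose ξ hξ1 hξ2 hξ3 using hMVT
  have hθlo : ∀ n, N ≤ n → n ≤ M - 2 → U⁻¹ ≤ θ n := by
    intro n h1 h2
    have := hlo _ (hξ2 n h1 h2)
    rw [hξ3 n h1 h2] at this
    linarith
  have hθhi : ∀ n, N ≤ n → n ≤ M - 2 → θ n ≤ 1 - V⁻¹ := by
    intro n h1 h2
    have := hhi _ (hξ2 n h1 h2)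
    rw [hξ3 n h1 h2] at this
    linarith
  have hstep : ∀ n : ℤ, N ≤ n → n ≤ M - 2 →
      e (n+1) = Complex.exp (2 * π * Complex.I * θ n) * e n := by
    intro n h1 h2
    rw [hedef]
    simp only []
    rw [show (2 * (π:ℂ) * Complex.I * ((f ((n+1:ℤ)) : ℝ) : ℂ))
        = 2 * π * Complex.I * (θ n : ℝ) + 2 * π * Complex.I * ((f n : ℝ):ℂ)
          + (ℓ:ℂ) * (2 * π * Complex.I) by rw [hθdef]; push_cast; ring,
      Complex.exp_add, Complex.exp_add, Complex.exp_int_mul_two_pi_mul_I, mul_one]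
  rcases hmono with hm | hm
  · -- monotone
    have hθmono : ∀ n, N ≤ n → n ≤ M - 3 → θ n ≤ θ (n+1) := by
      intro n h1 h2
      have e1 := hξ3 n h1 (by omega)
      have e2 := hξ3 (n+1) (by omega) (by omega)
      have hle : ξ n h1 (by omega) ≤ ξ (n+1) (by omega) (by omega) := by
        have a1 := (hξ1 n h1 (by omega)).2
        have a2 := (hξ1 (n+1) (by omega) (by omega)).1
        push_cast at a2
        linarith
      have := hm (hξ2 n h1 (by omega)) (hξ2 (n+1) (by omega) (by omega)) hle
      rw [e1, e2] at this
      linarith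
    exact kl_core N M U V hU hV hNM2 e θ hnorm hstep hθlo hθhi hθmono
  · -- antitone : conjugate
    set e' : ℤ → ℂ := fun n => Complex.exp (2 * π * Complex.I * ((-f n : ℝ) : ℂ)) with he'def
    have hconj : ∀ n : ℤ, e' n = starRingEnd ℂ (e n) := by
      intro n
      rw [he'def, hedef]
      simp only []
      rw [show (2*(π:ℂ)*Complex.I*((f n:ℝ):ℂ)) = (((2*π*f n : ℝ)):ℂ) * Complex.I by
          push_cast; ring,
        show (2*(π:ℂ)*Complex.I*((-f n:ℝ):ℂ)) = (((-(2*π*f n) : ℝ)):ℂ) * Complex.I by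
          push_cast; ring,
        ← Complex.exp_conj]
      congr 1
      rw [map_mul, Complex.conj_ofReal, Complex.conj_I]
      push_cast
      ring
    have habs : ‖∑ n ∈ Finset.Ico N M, e n‖
        = ‖∑ n ∈ Finset.Ico N M, e' n‖ := by
      rw [show (∑ n ∈ Finset.Ico N M, e' n) = starRingEnd ℂ (∑ n ∈ Finset.Ico N M, e n) by
        rw [map_sum]; exact Finset.sum_congr rfl fun n _ => hconj n, Complex.norm_conj]
    rw [show (U + V) / π = (V + U) / π by ring]
    calc ‖∑ n ∈ Finset.Ico N M, e n‖
        = ‖∑ n ∈ Finset.Ico N M, e' n‖ := habs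
      _ ≤ (V + U) / π := by
        refine kl_core N M V U hV hU hNM2 e' (fun n => 1 - θ n) ?_ ?_ ?_ ?_ ?_
        · intro n
          rw [he'def]
          simp only []
          rw [show (2 * (π:ℂ) * Complex.I * ((-f n : ℝ):ℂ)) = ((2 * π * (-f n) : ℝ) : ℂ) * Complex.I by
            push_cast; ring]
          exact Complex.norm_exp_ofReal_mul_I _
        · intro n h1 h2
          rw [he'def]
          simp only []
          rw [show (2 * (π:ℂ) * Complex.I * ((-f ((n+1:ℤ)) : ℝ) : ℂ))
              = 2 * π * Complex.I * ((1 - θ n : ℝ):ℂ) + 2 * π * Complex.I * ((-f n : ℝ):ℂ)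
                + ((-ℓ - 1 : ℤ):ℂ) * (2 * π * Complex.I) by rw [hθdef]; push_cast; ring,
            Complex.exp_add, Complex.exp_add, Complex.exp_int_mul_two_pi_mul_I, mul_one]
        · intro n h1 h2
          have := hθhi n h1 h2; linarith
        · intro n h1 h2
          have := hθlo n h1 h2; linarith
        · intro n h1 h2
          have e1 := hξ3 n h1 (by omega)
          have e2 := hξ3 (n+1) (by omega) (by omega)
          have hle : ξ n h1 (by omega) ≤ ξ (n+1) (by omega) (by omega) := by
            have a1 := (hξ1 n h1 (by omega)).2
            have a2 := (hξ1 (n+1) (by omega) (by omega)).1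
            push_cast at a2
            linarith
          have := hm (hξ2 n h1 (by omega)) (hξ2 (n+1) (by omega) (by omega)) hle
          rw [e1, e2] at this
          show (1:ℝ) - θ n ≤ 1 - θ (n+1)
          linarith
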